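/- Let M, B_f, B_m, A_m, λ_u, λ_f be positive real constants. Then the function F(x) = (M·λ_u·x)/(B_f·(1 − e^{−λ_u·x})) + (A_m·λ_u·(1 − λ_f·x))/(B_m·(1 − e^{−A_m·λ_u·(1−λ_f·x)})) is convex on the open interval (0, 1/λ_f). -/

import Mathlib

open Real Set

noncomputable def gfun (t : ℝ) : ℝ := t / (1 - Real.exp (-t))
noncomputable def hfun (t : ℝ) : ℝ := t / (Real.exp t - 1)
noncomputable def hfun1 (t : ℝ) : ℝ :=
  ((Real.exp t - 1) - t * Real.exp t) / (Real.exp t - 1) ^ 2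
noncomputable def hfun2 (t : ℝ) : ℝ :=
  Real.exp t * ((t - 2) * Real.exp t + t + 2) / (Real.exp t - 1) ^ 3

lemma exp_sub_one_pos {x : ℝ} (hx : 0 < x) : 0 < Real.exp x - 1 := by
  have := Real.add_one_lt_exp (ne_of_gt hx); linarith

lemma hd1 {x : ℝ} (hx : 0 < x) : HasDerivAt hfun (hfun1 x) x := by
  have he : Real.exp x - 1 ≠ 0 := ne_of_gt (exp_sub_one_pos hx)
  have h := (hasDerivAt_id x).div ((Real.hasDerivAt_exp x).sub_const 1) he
  refine h.congr_deriv ?_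
  unfold hfun1; field_simp; rfl

lemma hd2 {x : ℝ} (hx : 0 < x) : HasDerivAt hfun1 (hfun2 x) x := by
  have he : Real.exp x - 1 ≠ 0 := ne_of_gt (exp_sub_one_pos hx)
  have hN : HasDerivAt (fun t => (Real.exp t - 1) - t * Real.exp t)
      (-(x * Real.exp x)) x := by
    have hmul : HasDerivAt (fun t : ℝ => t * Real.exp t)
        (1 * Real.exp x + x * Real.exp x) x :=
      (hasDerivAt_id x).mul (Real.hasDerivAt_exp x)
    have := ((Real.hasDerivAt_exp x).sub_const 1).sub hmul
    refine this.congr_deriv ?_; ring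
  have hD : HasDerivAt (fun t => (Real.exp t - 1) ^ 2)
      (2 * (Real.exp x - 1) * Real.exp x) x := by
    have := (((Real.hasDerivAt_exp x).sub_const 1).pow 2)
    refine this.congr_deriv ?_; ring
  have := hN.div hD (pow_ne_zero 2 he)
  refine this.congr_deriv ?_
  unfold hfun2; field_simp; ring

noncomputable def phi (t : ℝ) : ℝ := (t - 2) * Real.exp t + t + 2
noncomputable def phi1 (t : ℝ) : ℝ := (t - 1) * Real.exp t + 1

lemma phid (x : ℝ) : HasDerivAt phi (phi1 x) x := by
  have := ((((hasDerivAt_id x).sub_const 2).mul (Real.hasDerivAt_exp x)).add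
    (hasDerivAt_id x)).add_const 2
  refine this.congr_deriv ?_
  simp only [phi1, id_eq]; ring

lemma phi1d (x : ℝ) : HasDerivAt phi1 (x * Real.exp x) x := by
  have := (((hasDerivAt_id x).sub_const 1).mul (Real.hasDerivAt_exp x)).add_const 1
  refine this.congr_deriv ?_; simp only [id_eq]; ring

lemma phi1_nonneg {x : ℝ} (hx : 0 ≤ x) : 0 ≤ phi1 x := by
  have mono : MonotoneOn phi1 (Ici (0 : ℝ)) := by
    apply monotoneOn_of_deriv_nonneg (convex_Ici 0)
    · exact fun y _ => (phi1d y).continuousAt.continuousWithinAt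
    · exact fun y _ => (phi1d y).differentiableAt.differentiableWithinAt
    · intro y hy
      rw [interior_Ici] at hy
      rw [(phi1d y).deriv]
      exact mul_nonneg (le_of_lt hy) (Real.exp_pos y).le
  have h0 : phi1 0 = 0 := by simp [phi1]
  have := mono (self_mem_Ici) hx hx
  linarith [this, h0.symm.le]

lemma phi_nonneg {x : ℝ} (hx : 0 ≤ x) : 0 ≤ phi x := by
  have mono : MonotoneOn phi (Ici (0 : ℝ)) := by
    apply monotoneOn_of_deriv_nonneg (convex_Ici 0)
    · exact fun y _ => (phid y).continuousAt.continuousWithinAt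
    · exact fun y _ => (phid y).differentiableAt.differentiableWithinAt
    · intro y hy
      rw [interior_Ici] at hy
      rw [(phid y).deriv]
      exact phi1_nonneg (le_of_lt hy)
  have h0 : phi 0 = 0 := by norm_num [phi]
  have := mono (self_mem_Ici) hx hx
  linarith [this, h0.symm.le]

lemma hfun2_nonneg {x : ℝ} (hx : 0 < x) : 0 ≤ hfun2 x := by
  unfold hfun2
  have h1 : 0 ≤ (x - 2) * Real.exp x + x + 2 := phi_nonneg hx.le
  have h2 : 0 < (Real.exp x - 1) ^ 3 := pow_pos (exp_sub_one_pos hx) 3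
  positivity

lemma hconv : ConvexOn ℝ (Ioi (0 : ℝ)) hfun := by
  apply convexOn_of_hasDerivWithinAt2_nonneg (f' := hfun1) (f'' := hfun2) (convex_Ioi 0)
  · apply ContinuousOn.div continuousOn_id
    · exact (Real.continuous_exp.sub continuous_const).continuousOn
    · exact fun x hx => ne_of_gt (exp_sub_one_pos hx)
  · intro x hx
    rw [interior_Ioi] at hx
    exact (hd1 hx).hasDerivWithinAt
  · intro x hx
    rw [interior_Ioi] at hx
    exact (hd2 hx).hasDerivWithinAt
  · intro x hx
    rw [interior_Ioi] at hx
    exact hfun2_nonneg hx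

lemma geq {t : ℝ} (ht : 0 < t) : gfun t = t + hfun t := by
  unfold gfun hfun
  have he : Real.exp t - 1 ≠ 0 := ne_of_gt (exp_sub_one_pos ht)
  have hep : (0 : ℝ) < Real.exp t := Real.exp_pos t
  rw [Real.exp_neg]
  rw [show (1 : ℝ) - (Real.exp t)⁻¹ = (Real.exp t - 1) / Real.exp t by
    field_simp]
  rw [div_div_eq_mul_div]
  field_simp
  ring

lemma convexOn_congr' {s : Set ℝ} {f g : ℝ → ℝ} (hf : ConvexOn ℝ s f)
    (h : ∀ x ∈ s, f x = g x) : ConvexOn ℝ s g := by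
  refine ⟨hf.1, fun x hx y hy a b ha hb hab => ?_⟩
  rw [← h _ hx, ← h _ hy, ← h _ (hf.1 hx hy ha hb hab)]
  exact hf.2 hx hy ha hb hab

lemma gconv : ConvexOn ℝ (Ioi (0 : ℝ)) gfun := by
  have h : ConvexOn ℝ (Ioi (0 : ℝ)) (fun t => t + hfun t) :=
    (convexOn_id (convex_Ioi 0)).add hconv
  exact convexOn_congr' h (fun x hx => (geq hx).symm)

lemma convexOn_comp_affine {s : Set ℝ} {g : ℝ → ℝ} (hg : ConvexOn ℝ s g) (p q : ℝ) :
    ConvexOn ℝ {x : ℝ | p * x + q ∈ s} (fun x => g (p * x + q)) := by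
  have key : ∀ (x y a b : ℝ), a + b = 1 →
      p * (a • x + b • y) + q = a • (p * x + q) + b • (p * y + q) := by
    intro x y a b hab
    simp only [smul_eq_mul]
    linear_combination (-q) * hab
  constructor
  · intro x hx y hy a b ha hb hab
    show p * (a • x + b • y) + q ∈ s
    rw [key x y a b hab]
    exact hg.1 hx hy ha hb hab
  · intro x hx y hy a b ha hb hab
    simp only
    rw [key x y a b hab]
    exact hg.2 hx hy ha hb hab

theorem stmt_2 (M B_f B_m A_m lam_u lam_f : ℝ)
    (hM : 0 < M) (hBf : 0 < B_f) (hBm : 0 < B_m) (hAm : 0 < A_m)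
    (hlu : 0 < lam_u) (hlf : 0 < lam_f) :
    ConvexOn ℝ (Set.Ioo (0 : ℝ) (1 / lam_f))
      (fun x : ℝ =>
        (M * lam_u * x) / (B_f * (1 - Real.exp (-(lam_u * x)))) +
        (A_m * lam_u * (1 - lam_f * x)) /
          (B_m * (1 - Real.exp (-(A_m * lam_u * (1 - lam_f * x)))))) := by
  set s : Set ℝ := Set.Ioo (0 : ℝ) (1 / lam_f) with hs
  have hconv_s : Convex ℝ s := convex_Ioo _ _
  -- first term
  have hsub1 : s ⊆ {x : ℝ | lam_u * x + 0 ∈ Ioi (0 : ℝ)} := by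
    intro x hx
    simp only [mem_setOf_eq, add_zero, mem_Ioi]
    exact mul_pos hlu hx.1
  have hc1 : ConvexOn ℝ s (fun x => (M / B_f) • gfun (lam_u * x + 0)) := by
    apply ConvexOn.smul (by positivity)
    exact ((convexOn_comp_affine gconv lam_u 0).subset hsub1 hconv_s)
  -- second term
  have hsub2 : s ⊆ {x : ℝ | (-(A_m * lam_u * lam_f)) * x + A_m * lam_u ∈ Ioi (0 : ℝ)} := by
    intro x hx
    simp only [mem_setOf_eq, mem_Ioi]
    have h1 : lam_f * x < 1 := by
      have := hx.2
      rw [lt_div_iff₀ hlf] at this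
      linarith
    nlinarith [mul_pos hAm hlu]
  have hc2 : ConvexOn ℝ s
      (fun x => (1 / B_m) • gfun ((-(A_m * lam_u * lam_f)) * x + A_m * lam_u)) := by
    apply ConvexOn.smul (by positivity)
    exact ((convexOn_comp_affine gconv (-(A_m * lam_u * lam_f)) (A_m * lam_u)).subset
      hsub2 hconv_s)
  have hsum := hc1.add hc2
  apply convexOn_congr' hsum
  intro x hx
  have hx1 : 0 < lam_u * x := mul_pos hlu hx.1
  have hx2 : 0 < A_m * lam_u * (1 - lam_f * x) := by
    have h1 : lam_f * x < 1 := by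
      have := hx.2
      rw [lt_div_iff₀ hlf] at this
      linarith
    nlinarith [mul_pos hAm hlu]
  have hd1' : (0 : ℝ) < 1 - Real.exp (-(lam_u * x)) := by
    have : Real.exp (-(lam_u * x)) < 1 := by
      rw [Real.exp_lt_one_iff]; linarith
    linarith
  have hd2' : (0 : ℝ) < 1 - Real.exp (-(A_m * lam_u * (1 - lam_f * x))) := by
    have : Real.exp (-(A_m * lam_u * (1 - lam_f * x))) < 1 := by
      rw [Real.exp_lt_one_iff]; linarith
    linarith
  have harg : (-(A_m * lam_u * lam_f)) * x + A_m * lam_u = A_m * lam_u * (1 - lam_f * x) := by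
    ring
  simp only [Pi.add_apply, smul_eq_mul, harg, add_zero]
  unfold gfun
  rw [div_mul_div_comm, div_mul_div_comm, ← mul_assoc, one_mul]
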